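/- For every bounded infinite real sequence w and γ ∈ [0,1), the mean past-discounted payoff equals 1/(1-γ) times the mean payoff: liminf_{n→∞} (1/(n+1)) Σ_{k=0}^{n} Σ_{i=0}^{k} γ^{k-i} w_i = (1/(1-γ)) · liminf_{n→∞} (1/(n+1)) Σ_{k=0}^{n} w_k. -/

import Mathlib

open Filter Finset Topology

lemma my_liminf_add_of_tendsto_zero {u v : ℕ → ℝ}
    (hub : IsBoundedUnder (· ≤ ·) atTop u) (hlb : IsBoundedUnder (· ≥ ·) atTop u)
    (hv : Tendsto v atTop (𝓝 (0:ℝ))) :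
    liminf (u + v) atTop = liminf u atTop := by
  have hvb : IsBoundedUnder (· ≤ ·) atTop v := hv.isBoundedUnder_le
  have hvb' : IsBoundedUnder (· ≥ ·) atTop v := hv.isBoundedUnder_ge
  have hls : limsup v atTop = 0 := hv.limsup_eq
  have hli : liminf v atTop = 0 := hv.liminf_eq
  apply le_antisymm
  · have h := liminf_add_le (u := v) (v := u) hvb' hvb hlb hub.isCoboundedUnder_ge
    rw [hls, zero_add, add_comm] at h
    exact h
  · have h := le_liminf_add (u := u) (v := v) hlb hub hvb' hvb.isCoboundedUnder_ge
    rw [hli, add_zero] at h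
    exact h

/-- Mean past-discounted payoff equals `1/(1-γ)` times the mean payoff. -/
theorem meanPastDiscounted_eq
    (w : ℕ → ℝ) (C : ℝ) (hw : ∀ n, |w n| ≤ C)
    (γ : ℝ) (hγ0 : 0 ≤ γ) (hγ1 : γ < 1) :
    Filter.liminf
      (fun n : ℕ => (1 / ((n : ℝ) + 1)) * ∑ k ∈ Finset.range (n + 1),
        ∑ i ∈ Finset.range (k + 1), γ ^ (k - i) * w i)
      Filter.atTop
      = (1 / (1 - γ)) *
        Filter.liminf
          (fun n : ℕ => (1 / ((n : ℝ) + 1)) * ∑ k ∈ Finset.range (n + 1), w k)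
          Filter.atTop := by
  have hγ : (0:ℝ) < 1 - γ := by linarith
  have hγne : γ ≠ 1 := ne_of_lt hγ1
  have hC : 0 ≤ C := le_trans (abs_nonneg _) (hw 0)
  set c : ℝ := 1 / (1 - γ) with hc
  have hcpos : 0 < c := by positivity
  set b : ℕ → ℝ := fun n => (1 / ((n : ℝ) + 1)) * ∑ k ∈ Finset.range (n + 1), w k with hb
  set v : ℕ → ℝ := fun n =>
    -((c / ((n : ℝ) + 1)) * ∑ i ∈ Finset.range (n + 1), γ ^ (n + 1 - i) * w i) with hvdef
  have hn1 : ∀ n : ℕ, (0:ℝ) < (n : ℝ) + 1 := fun n => by positivity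
  -- the key algebraic identity
  have key : (fun n : ℕ => (1 / ((n : ℝ) + 1)) * ∑ k ∈ Finset.range (n + 1),
        ∑ i ∈ Finset.range (k + 1), γ ^ (k - i) * w i) = (fun n => c * b n) + v := by
    funext n
    have hswap : ∑ k ∈ Finset.range (n + 1), ∑ i ∈ Finset.range (k + 1), γ ^ (k - i) * w i
        = ∑ i ∈ Finset.range (n + 1), ∑ j ∈ Finset.Ico i (n + 1), γ ^ (j - i) * w i := by
      simp only [Finset.range_eq_Ico]
      rw [← Finset.sum_Ico_Ico_comm 0 (n + 1) (fun i j => γ ^ (j - i) * w i)]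
    have hg : ∀ m : ℕ, (∑ j ∈ Finset.range m, γ ^ j) = (1 - γ ^ m) * c := by
      intro m
      rw [hc, mul_one_div, eq_div_iff (ne_of_gt hγ)]
      have h := geom_sum_mul γ m
      linear_combination (-1 : ℝ) * h
    have hinner : ∀ i ∈ Finset.range (n + 1),
        ∑ j ∈ Finset.Ico i (n + 1), γ ^ (j - i) * w i
          = (w i - γ ^ (n + 1 - i) * w i) * c := by
      intro i hi
      rw [Finset.sum_Ico_eq_sum_range]
      have : ∀ j ∈ Finset.range (n + 1 - i), γ ^ (i + j - i) * w i = γ ^ j * w i := by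
        intro j _; congr 2; omega
      rw [Finset.sum_congr rfl this, ← Finset.sum_mul, hg]
      ring
    rw [hswap, Finset.sum_congr rfl hinner]
    simp only [Pi.add_apply, hb, hvdef, sub_mul, Finset.sum_sub_distrib, ← Finset.sum_mul]
    field_simp
    ring
  -- v tends to 0
  have hvtend : Filter.Tendsto v Filter.atTop (nhds 0) := by
    have hgt : Filter.Tendsto (fun n : ℕ => (c * (C * c)) / ((n : ℝ) + 1))
        Filter.atTop (nhds 0) :=
      Filter.Tendsto.div_atTop tendsto_const_nhds
        (Filter.tendsto_atTop_add_const_right _ 1 tendsto_natCast_atTop_atTop)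
    refine squeeze_zero_norm (fun n => ?_) hgt
    ·
      have hsum : |∑ i ∈ Finset.range (n + 1), γ ^ (n + 1 - i) * w i| ≤ C * c := by
        calc |∑ i ∈ Finset.range (n + 1), γ ^ (n + 1 - i) * w i|
            ≤ ∑ i ∈ Finset.range (n + 1), |γ ^ (n + 1 - i) * w i| :=
              Finset.abs_sum_le_sum_abs _ _
          _ ≤ ∑ i ∈ Finset.range (n + 1), γ ^ (n + 1 - i) * C := by
              apply Finset.sum_le_sum
              intro i _
              rw [abs_mul, abs_pow, abs_of_nonneg hγ0]
              exact mul_le_mul_of_nonneg_left (hw i) (by positivity)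
          _ ≤ C * c := by
              rw [← Finset.sum_mul, mul_comm]
              apply mul_le_mul_of_nonneg_left _ hC
              have hr : ∑ i ∈ Finset.range (n + 1), γ ^ (n + 1 - i)
                  = ∑ j ∈ Finset.range (n + 1), γ ^ (j + 1) := by
                rw [← Finset.sum_range_reflect (fun j => γ ^ (j + 1)) (n + 1)]
                apply Finset.sum_congr rfl
                intro i hi
                simp only [Finset.mem_range] at hi
                congr 1
                omega
              rw [hr]
              have : ∑ j ∈ Finset.range (n + 1), γ ^ (j + 1)
                  = γ * ∑ j ∈ Finset.range (n + 1), γ ^ j := by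
                rw [Finset.mul_sum]; apply Finset.sum_congr rfl; intro j _; ring
              rw [this, geom_sum_eq hγne, hc]
              have h1 : 0 ≤ γ ^ (n + 1) := by positivity
              have h2 : γ ^ (n + 1) ≤ 1 := pow_le_one₀ hγ0 (le_of_lt hγ1)
              have h3 : γ - 1 ≠ 0 := by intro h; exact hγne (by linarith)
              have hval : γ * ((γ ^ (n + 1) - 1) / (γ - 1))
                  = γ * (1 - γ ^ (n + 1)) / (1 - γ) := by
                field_simp
                ring
              have hA : γ * (1 - γ ^ (n + 1)) ≤ 1 := by nlinarith
              rw [hval, div_le_div_iff₀ hγ hγ]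
              nlinarith [mul_le_mul_of_nonneg_right hA (le_of_lt hγ)]
      have : ‖v n‖ = (c / ((n : ℝ) + 1)) * |∑ i ∈ Finset.range (n + 1), γ ^ (n + 1 - i) * w i| := by
        rw [hvdef]
        simp only [Real.norm_eq_abs, abs_neg, abs_mul]
        congr 1
        rw [abs_of_nonneg (by positivity : (0:ℝ) ≤ c / ((n : ℝ) + 1))]
      rw [this]
      calc c / ((n : ℝ) + 1) * |∑ i ∈ Finset.range (n + 1), γ ^ (n + 1 - i) * w i|
          ≤ c / ((n : ℝ) + 1) * (C * c) :=
            mul_le_mul_of_nonneg_left hsum (by positivity)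
        _ = c * (C * c) / ((n : ℝ) + 1) := by ring
  -- boundedness of b
  have hbabs : ∀ n, |b n| ≤ C := by
    intro n
    rw [hb, abs_mul, abs_of_nonneg (le_of_lt (by positivity : (0:ℝ) < 1 / ((n : ℝ) + 1)))]
    calc 1 / ((n : ℝ) + 1) * |∑ k ∈ Finset.range (n + 1), w k|
        ≤ 1 / ((n : ℝ) + 1) * ((n + 1) * C) := by
          apply mul_le_mul_of_nonneg_left _ (by positivity)
          calc |∑ k ∈ Finset.range (n + 1), w k|
              ≤ ∑ k ∈ Finset.range (n + 1), |w k| := Finset.abs_sum_le_sum_abs _ _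
            _ ≤ ∑ k ∈ Finset.range (n + 1), C := Finset.sum_le_sum fun k _ => hw k
            _ = ((n : ℝ) + 1) * C := by simp [mul_comm]
      _ = C := by field_simp
  have hub : Filter.IsBoundedUnder (· ≤ ·) Filter.atTop (fun n => c * b n) :=
    Filter.isBoundedUnder_of ⟨c * C, fun n => by
      have := (abs_le.mp (hbabs n)).2
      nlinarith [(abs_le.mp (hbabs n)).1]⟩
  have hlb : Filter.IsBoundedUnder (· ≥ ·) Filter.atTop (fun n => c * b n) :=
    Filter.isBoundedUnder_of ⟨-(c * C), fun n => by
      have := (abs_le.mp (hbabs n)).1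
      nlinarith⟩
  have hbub : Filter.IsBoundedUnder (· ≤ ·) Filter.atTop b :=
    Filter.isBoundedUnder_of ⟨C, fun n => (abs_le.mp (hbabs n)).2⟩
  have hblb : Filter.IsBoundedUnder (· ≥ ·) Filter.atTop b :=
    Filter.isBoundedUnder_of ⟨-C, fun n => (abs_le.mp (hbabs n)).1⟩
  rw [key, my_liminf_add_of_tendsto_zero hub hlb hvtend]
  have hmono : Monotone (fun x : ℝ => c * x) := monotone_mul_left_of_nonneg (le_of_lt hcpos)
  have := hmono.map_liminf_of_continuousAt (F := Filter.atTop) b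
    ((continuous_const.mul continuous_id).continuousAt) hbub.isCoboundedUnder_ge hblb
  exact this.symm
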